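/- Given a monotone non-decreasing sequence A[0..n] with entries in ℕ bounded by some value, set D = 5·A[n], W = 2n+1, and create for every i ∈ [0,n] a light item with profit A[i] and weight i, and a heavy item with profit D − A[i] and weight W − i. Then A is superadditive (A[i] + A[j] ≤ A[i+j] for all i+j ≤ n) if and only if the optimal Unbounded Knapsack value with capacity W over this item set is exactly D. -/

import Mathlib

section helpers
variable {n : ℕ} {A : ℕ → ℕ}

lemma ml1 (hmono : ∀ i j, i ≤ j → j ≤ n → A i ≤ A j)
    (super : ∀ i j, i + j ≤ n → A i + A j ≤ A (i + j)) :
    ∀ m : Multiset ℕ, m.sum ≤ n → (m.map A).sum ≤ A m.sum := by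
  intro m
  induction m using Multiset.induction with
  | empty => simp
  | cons a t ih =>
    simp only [Multiset.map_cons, Multiset.sum_cons]
    intro hsum
    have h1 : t.sum ≤ n := le_trans (Nat.le_add_left _ _) hsum
    calc A a + (t.map A).sum ≤ A a + A t.sum := Nat.add_le_add_left (ih h1) _
      _ ≤ A (a + t.sum) := super a t.sum hsum

lemma ml2 (hmono : ∀ i j, i ≤ j → j ≤ n → A i ≤ A j)
    (super : ∀ i j, i + j ≤ n → A i + A j ≤ A (i + j)) :
    ∀ k (m : Multiset ℕ), Multiset.card m = k → (∀ x ∈ m, x ≤ n) →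
      m.sum ≤ 2 * n + 1 → (m.map A).sum ≤ 5 * A n := by
  intro k
  induction k using Nat.strong_induction_on with
  | _ k ih =>
  intro m hcard hmem hsum
  by_cases hpair : ∃ i ∈ m, ∃ j ∈ m.erase i, i + j ≤ n
  · obtain ⟨i, hi, j, hj, hijn⟩ := hpair
    set t := (m.erase i).erase j with ht
    have h2 : j ::ₘ t = m.erase i := Multiset.cons_erase hj
    have h1 : i ::ₘ j ::ₘ t = m := by rw [h2]; exact Multiset.cons_erase hi
    set m' : Multiset ℕ := (i + j) ::ₘ t with hm'
    have hcard' : Multiset.card m' + 1 = k := by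
      rw [← hcard, ← h1]; simp [hm']
    have hmem' : ∀ x ∈ m', x ≤ n := by
      intro x hx
      rcases Multiset.mem_cons.mp hx with h | h
      · omega
      · exact hmem x (by rw [← h1]; simp [h])
    have hsum' : m'.sum ≤ 2 * n + 1 := by
      have : m'.sum = m.sum := by
        rw [← h1, hm', Multiset.sum_cons, Multiset.sum_cons, Multiset.sum_cons]
        ring
      omega
    have hrec := ih (Multiset.card m') (by omega) m' rfl hmem' hsum'
    have e1 : (m.map A).sum = A i + (A j + (t.map A).sum) := by
      rw [← h1, Multiset.map_cons, Multiset.map_cons, Multiset.sum_cons, Multiset.sum_cons]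
    have e2 : (m'.map A).sum = A (i + j) + (t.map A).sum := by
      rw [hm', Multiset.map_cons, Multiset.sum_cons]
    have hs := super i j hijn
    omega
  · push_neg at hpair
    -- terminal: all pairs sum > n
    have hfive : Multiset.card m ≤ 5 := by
      by_contra h6
      push_neg at h6
      classical
      set m1 := m.filter (fun x => 2 * x ≤ n) with hm1
      set m2 := m.filter (fun x => ¬ 2 * x ≤ n) with hm2
      have hsplit : m1 + m2 = m := Multiset.filter_add_not _ m
      have hcard1 : Multiset.card m1 ≤ 1 := by
        by_contra h2
        push_neg at h2
        obtain ⟨x, s, hxs⟩ : ∃ x s, m1 = x ::ₘ s := by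
          rcases Multiset.exists_mem_of_ne_zero (s := m1) (by
            intro h0; rw [h0] at h2; simp at h2) with ⟨x, hx⟩
          exact ⟨x, _, (Multiset.cons_erase hx).symm⟩
        have hscard : 0 < Multiset.card s := by
          have := congrArg Multiset.card hxs; simp at this; omega
        obtain ⟨y, hy⟩ := Multiset.exists_mem_of_ne_zero (Multiset.card_pos.mp hscard)
        have hxm1 : x ∈ m1 := by rw [hxs]; simp
        have hym1 : y ∈ m1 := by rw [hxs]; exact Multiset.mem_cons_of_mem hy
        have hxn : 2 * x ≤ n := (Multiset.mem_filter.mp hxm1).2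
        have hyn : 2 * y ≤ n := (Multiset.mem_filter.mp hym1).2
        have hxm : x ∈ m := (Multiset.mem_filter.mp hxm1).1
        have hyerase : y ∈ m.erase x := by
          by_cases hxy : y = x
          · subst hxy
            have hc : 2 ≤ Multiset.count y m1 := by
              rw [hxs, Multiset.count_cons_self]
              have : y ∈ s := hy
              have := Multiset.one_le_count_iff_mem.mpr this
              omega
            have hcm : 2 ≤ Multiset.count y m :=
              le_trans hc (Multiset.count_le_of_le y (Multiset.filter_le _ m))
            rw [← Multiset.count_pos, Multiset.count_erase_self]
            omega
          · rw [Multiset.mem_erase_of_ne hxy]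
            exact (Multiset.mem_filter.mp hym1).1
        have := hpair x hxm y hyerase
        omega
      have hcardsum : Multiset.card m1 + Multiset.card m2 = Multiset.card m := by
        rw [← hsplit]; simp
      have hcard2 : 5 ≤ Multiset.card m2 := by omega
      have hbig : ∀ x ∈ m2, n + 1 ≤ 2 * x := by
        intro x hx
        have := (Multiset.mem_filter.mp hx).2
        omega
      have hlow : Multiset.card m2 * (n + 1) ≤ (m2.map (fun x => 2 * x)).sum := by
        have := Multiset.card_nsmul_le_sum (s := m2.map (fun x => 2 * x)) (a := n + 1)
          (by intro x hx; rcases Multiset.mem_map.mp hx with ⟨y, hy, rfl⟩; exact hbig y hy)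
        simpa [smul_eq_mul] using this
      have hmap2 : (m2.map (fun x => 2 * x)).sum = 2 * m2.sum := by
        have h := Multiset.sum_map_mul_left (s := m2) (a := 2) (f := fun x => x)
        simpa using h
      have hsum2 : m2.sum ≤ m.sum := by
        rw [← hsplit, Multiset.sum_add]; omega
      have : 5 * (n + 1) ≤ 2 * (2 * n + 1) := by
        calc 5 * (n + 1) ≤ Multiset.card m2 * (n + 1) := by
              exact Nat.mul_le_mul_right _ hcard2
          _ ≤ 2 * m2.sum := by omega
          _ ≤ 2 * m.sum := by omega
          _ ≤ 2 * (2 * n + 1) := by omega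
      omega
    have hAn : ∀ x ∈ m, A x ≤ A n := fun x hx => hmono x n (hmem x hx) le_rfl
    calc (m.map A).sum ≤ (m.map (fun _ => A n)).sum :=
          Multiset.sum_map_le_sum_map _ _ hAn
      _ = Multiset.card m * A n := by simp [Multiset.map_const', mul_comm]
      _ ≤ 5 * A n := Nat.mul_le_mul_right _ hfive

lemma bridge (n : ℕ) (A : ℕ → ℕ) (xL : Fin (n + 1) → ℕ) :
    ∃ m : Multiset ℕ, m.sum = ∑ i, xL i * (i : ℕ) ∧
      (m.map A).sum = ∑ i, xL i * A (i : ℕ) ∧ ∀ x ∈ m, x ≤ n := by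
  refine ⟨∑ i : Fin (n + 1), Multiset.replicate (xL i) ((i : ℕ)), ?_, ?_, ?_⟩
  · have h : (∑ i : Fin (n + 1), Multiset.replicate (xL i) ((i : ℕ))).sum
        = ∑ i : Fin (n + 1), (Multiset.replicate (xL i) ((i : ℕ))).sum :=
      map_sum Multiset.sumAddMonoidHom _ _
    rw [h]; simp [Multiset.sum_replicate, smul_eq_mul]
  · have h1 : (∑ i : Fin (n + 1), Multiset.replicate (xL i) ((i : ℕ))).map A
        = ∑ i : Fin (n + 1), Multiset.replicate (xL i) (A (i : ℕ)) := by
      have h := map_sum (Multiset.mapAddMonoidHom A)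
        (fun i : Fin (n + 1) => Multiset.replicate (xL i) ((i : ℕ))) Finset.univ
      simp only [Multiset.coe_mapAddMonoidHom, Multiset.map_replicate] at h
      exact h
    rw [h1]
    have h2 : (∑ i : Fin (n + 1), Multiset.replicate (xL i) (A (i : ℕ))).sum
        = ∑ i : Fin (n + 1), (Multiset.replicate (xL i) (A (i : ℕ))).sum :=
      map_sum Multiset.sumAddMonoidHom _ _
    rw [h2]; simp [Multiset.sum_replicate, smul_eq_mul]
  · intro x hx
    rw [Multiset.mem_sum] at hx
    obtain ⟨i, -, hxi⟩ := hx
    rw [Multiset.eq_of_mem_replicate hxi]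
    exact i.is_le

theorem superadditivity_iff_knapsack (n : ℕ) (A : ℕ → ℕ)
    (hA0 : A 0 = 0)
    (hmono : ∀ i j, i ≤ j → j ≤ n → A i ≤ A j)
    (D W : ℕ) (hD : D = 5 * A n) (hW : W = 2 * n + 1) :
    (∀ i j, i + j ≤ n → A i + A j ≤ A (i + j)) ↔
    sSup {v | ∃ xL xH : Fin (n + 1) → ℕ,
        (∑ i, xL i * (i : ℕ)) + (∑ i, xH i * (W - (i : ℕ))) ≤ W ∧
        v = (∑ i, xL i * A (i : ℕ)) + (∑ i, xH i * (D - A (i : ℕ)))} = D := by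
  classical
  set S := {v | ∃ xL xH : Fin (n + 1) → ℕ,
      (∑ i, xL i * (i : ℕ)) + (∑ i, xH i * (W - (i : ℕ))) ≤ W ∧
      v = (∑ i, xL i * A (i : ℕ)) + (∑ i, xH i * (D - A (i : ℕ)))} with hS
  have hnF : ((⟨n, by omega⟩ : Fin (n + 1)) : ℕ) = n := rfl
  have hAnD : A n ≤ D := by omega
  have hDmem : D ∈ S := by
    refine ⟨fun k => if k = ⟨n, by omega⟩ then 1 else 0,
            fun k => if k = ⟨n, by omega⟩ then 1 else 0, ?_, ?_⟩
    · simp only [ite_mul, one_mul, zero_mul, Finset.sum_ite_eq', Finset.mem_univ, if_true, hnF]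
      omega
    · simp only [ite_mul, one_mul, zero_mul, Finset.sum_ite_eq', Finset.mem_univ, if_true, hnF]
      omega
  have hbdd : BddAbove S := by
    refine ⟨A n * W + D * W, ?_⟩
    rintro v ⟨xL, xH, hw, rfl⟩
    have hL : (∑ i, xL i * A (i : ℕ)) ≤ A n * ∑ i, xL i * (i : ℕ) := by
      rw [Finset.mul_sum]
      refine Finset.sum_le_sum ?_
      intro i _
      by_cases h0 : (i : ℕ) = 0
      · simp [h0, hA0]
      · have h1 : A (i : ℕ) ≤ A n * (i : ℕ) :=
          le_trans (hmono i n i.is_le le_rfl) (Nat.le_mul_of_pos_right _ (Nat.pos_of_ne_zero h0))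
        calc xL i * A (i : ℕ) ≤ xL i * (A n * (i : ℕ)) := Nat.mul_le_mul_left _ h1
          _ = A n * (xL i * (i : ℕ)) := by ring
    have hH : (∑ i, xH i * (D - A (i : ℕ))) ≤ D * ∑ i, xH i * (W - (i : ℕ)) := by
      rw [Finset.mul_sum]
      refine Finset.sum_le_sum ?_
      intro i _
      have hi : (i : ℕ) ≤ n := i.is_le
      have h1 : D - A (i : ℕ) ≤ D * (W - (i : ℕ)) :=
        le_trans (Nat.sub_le _ _) (Nat.le_mul_of_pos_right _ (by omega))
      calc xH i * (D - A (i : ℕ)) ≤ xH i * (D * (W - (i : ℕ))) := Nat.mul_le_mul_left _ h1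
        _ = D * (xH i * (W - (i : ℕ))) := by ring
    have h2 : (∑ i, xL i * (i : ℕ)) ≤ W := by omega
    have h3 : (∑ i, xH i * (W - (i : ℕ))) ≤ W := by omega
    have := Nat.mul_le_mul_left (A n) h2
    have := Nat.mul_le_mul_left D h3
    omega
  constructor
  · intro super
    have hub : ∀ v ∈ S, v ≤ D := by
      rintro v ⟨xL, xH, hw, rfl⟩
      set H := ∑ i, xH i with hH
      have hH1 : H * (n + 1) ≤ ∑ i, xH i * (W - (i : ℕ)) := by
        rw [hH, Finset.sum_mul]
        refine Finset.sum_le_sum ?_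
        intro i _
        have hi : (i : ℕ) ≤ n := i.is_le
        exact Nat.mul_le_mul_left _ (by omega)
      have hHle : H ≤ 1 := by
        by_contra hc
        push_neg at hc
        have : 2 * (n + 1) ≤ H * (n + 1) := Nat.mul_le_mul_right _ (by omega)
        omega
      obtain ⟨m, hm1, hm2, hm3⟩ := bridge n A xL
      interval_cases H
      · -- no heavy items
        have hx0 : ∀ i ∈ Finset.univ, xH i = 0 := Finset.sum_eq_zero_iff.mp hH.symm
        have hz1 : (∑ i, xH i * (W - (i : ℕ))) = 0 :=
          Finset.sum_eq_zero fun i hi => by rw [hx0 i hi]; ring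
        have hz2 : (∑ i, xH i * (D - A (i : ℕ))) = 0 :=
          Finset.sum_eq_zero fun i hi => by rw [hx0 i hi]; ring
        have hwL : m.sum ≤ 2 * n + 1 := by omega
        have := ml2 hmono super (Multiset.card m) m rfl hm3 hwL
        omega
      · -- exactly one heavy item
        obtain ⟨j0, hj0⟩ : ∃ j0, xH j0 ≠ 0 := by
          by_contra hc
          push_neg at hc
          have : H = 0 := Finset.sum_eq_zero fun i _ => hc i
          omega
        have hsplit := Finset.sum_erase_add Finset.univ xH (Finset.mem_univ j0)
        have hj01 : xH j0 = 1 ∧ ∑ i ∈ Finset.univ.erase j0, xH i = 0 := by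
          constructor <;> omega
        have hrest : ∀ i ∈ Finset.univ.erase j0, xH i = 0 :=
          Finset.sum_eq_zero_iff.mp hj01.2
        have heval : ∀ f : Fin (n + 1) → ℕ, (∑ i, xH i * f i) = f j0 := by
          intro f
          rw [← Finset.sum_erase_add Finset.univ _ (Finset.mem_univ j0), hj01.1]
          have : ∑ i ∈ Finset.univ.erase j0, xH i * f i = 0 :=
            Finset.sum_eq_zero fun i hi => by rw [hrest i hi]; ring
          omega
        have hwH : (∑ i, xH i * (W - (i : ℕ))) = W - (j0 : ℕ) := heval _
        have hpH : (∑ i, xH i * (D - A (i : ℕ))) = D - A (j0 : ℕ) := heval _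
        have hj0n : (j0 : ℕ) ≤ n := Nat.lt_succ_iff.mp j0.isLt
        have hwL : m.sum ≤ (j0 : ℕ) := by omega
        have hp1 : (m.map A).sum ≤ A m.sum := ml1 hmono super m (le_trans hwL hj0n)
        have hp2 : A m.sum ≤ A (j0 : ℕ) := hmono _ _ hwL hj0n
        have hp3 : A (j0 : ℕ) ≤ A n := hmono _ _ hj0n le_rfl
        omega
    exact le_antisymm (csSup_le ⟨D, hDmem⟩ hub) (le_csSup hbdd hDmem)
  · intro hsup i j hij
    by_contra hlt
    push_neg at hlt
    have hiF : ((⟨i, by omega⟩ : Fin (n + 1)) : ℕ) = i := rfl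
    have hjF : ((⟨j, by omega⟩ : Fin (n + 1)) : ℕ) = j := rfl
    have hkF : ((⟨i + j, by omega⟩ : Fin (n + 1)) : ℕ) = i + j := rfl
    have hvS : (A i + A j) + (D - A (i + j)) ∈ S := by
      refine ⟨fun k => (if k = ⟨i, by omega⟩ then 1 else 0) + (if k = ⟨j, by omega⟩ then 1 else 0),
              fun k => if k = ⟨i + j, by omega⟩ then 1 else 0, ?_, ?_⟩
      · simp only [add_mul, Finset.sum_add_distrib, ite_mul, one_mul, zero_mul,
          Finset.sum_ite_eq', Finset.mem_univ, if_true, hiF, hjF, hkF]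
        omega
      · simp only [add_mul, Finset.sum_add_distrib, ite_mul, one_mul, zero_mul,
          Finset.sum_ite_eq', Finset.mem_univ, if_true, hiF, hjF, hkF]
    have hle : (A i + A j) + (D - A (i + j)) ≤ D := by
      have h := le_csSup hbdd hvS
      rw [hsup] at h
      exact h
    have hAij : A (i + j) ≤ A n := hmono _ _ hij le_rfl
    omega
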